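/- arXiv:1605.08457 — 7 statements merged into one kernel-verified Lean document; each statement's English description precedes it below -/
import Mathlib

section
/- Let C be a bounded operator on H such that C² = I and G = JC is a positive self-adjoint operator (J a fundamental symmetry). Then there exists a bounded self-adjoint operator Q with JQ = −QJ such that C = J e^Q. -/
open NormedSpace

/-- If `C` is a bounded operator with `C² = I` such that `G = JC` is a
positive self-adjoint operator, then `C = J e^Q` for some bounded self-adjoint `Q`
anticommuting with `J`. -/
theorem stmt_4 {E : Type*} [NormedAddCommGroup E] [InnerProductSpace ℂ E] [CompleteSpace E]
    (J C : E →L[ℂ] E) (hJ : IsSelfAdjoint J) (hJ2 : J * J = 1)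
    (hC2 : C * C = 1) (hGsa : IsSelfAdjoint (J * C))
    (hGpos : ∀ f : E, f ≠ 0 → 0 < (inner ℂ ((J * C) f) f : ℂ).re) :
    ∃ Q : E →L[ℂ] E, IsSelfAdjoint Q ∧ J * Q = -(Q * J) ∧ C = J * exp Q := by
  set G : E →L[ℂ] E := J * C with hG
  -- `G` is a unit with inverse `C * J`
  have hGCJ : G * (C * J) = 1 := by
    rw [hG, mul_assoc, ← mul_assoc C C J, hC2, one_mul, hJ2]
  have hCJG : (C * J) * G = 1 := by
    rw [hG, mul_assoc, ← mul_assoc J J C, hJ2, one_mul, hC2]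
  set U : (E →L[ℂ] E)ˣ := ⟨G, C * J, hGCJ, hCJG⟩ with hU
  -- `G` is nonnegative
  have hGnn : (0 : E →L[ℂ] E) ≤ G := by
    rw [ContinuousLinearMap.nonneg_iff_isPositive, ContinuousLinearMap.isPositive_def']
    refine ⟨hGsa, fun x => ?_⟩
    rcases eq_or_ne x 0 with rfl | hx
    · simp [ContinuousLinearMap.reApplyInnerSelf]
    · exact le_of_lt (hGpos x hx)
  -- the real spectrum of `G` is strictly positive
  have hspec : ∀ x ∈ spectrum ℝ G, 0 < x := by
    intro x hx
    have h0 : (0:ℝ) ∉ spectrum ℝ G := spectrum.zero_notMem ℝ U.isUnit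
    have hnn : 0 ≤ x := spectrum_nonneg_of_nonneg hGnn hx
    rcases hnn.lt_or_eq with h | h
    · exact h
    · exact absurd (h ▸ hx) h0
  have hne : ∀ x ∈ spectrum ℝ G, x ≠ 0 := fun x hx => (hspec x hx).ne'
  have hlogcont : ContinuousOn Real.log (spectrum ℝ G) :=
    Real.continuousOn_log.mono fun x hx => hne x hx
  -- the conjugation by `J` as a star algebra homomorphism
  have hmul : ∀ x y : E →L[ℂ] E, J * (x * y) * J = (J * x * J) * (J * y * J) := by
    intro x y
    calc J * (x * y) * J = J * (x * ((J * J) * y)) * J := by rw [hJ2, one_mul]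
    _ = (J * x * J) * (J * y * J) := by simp only [mul_assoc]
  let φ : (E →L[ℂ] E) →⋆ₐ[ℂ] (E →L[ℂ] E) :=
  { toFun := fun x => J * x * J
    map_one' := by simpa using hJ2
    map_mul' := fun x y => hmul x y
    map_zero' := by simp
    map_add' := fun x y => by noncomm_ring
    commutes' := fun c => by
      simp [Algebra.algebraMap_eq_smul_one, mul_smul_comm, smul_mul_assoc, hJ2]
    map_star' := fun x => by
      simp only [star_mul, hJ.star_eq, mul_assoc] }
  have hφcont : Continuous φ := by
    show Continuous fun x : E →L[ℂ] E => J * x * J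
    exact (continuous_const.mul continuous_id).mul continuous_const
  -- set Q := log G
  set Q : E →L[ℂ] E := CFC.log G with hQ
  have hQsa : IsSelfAdjoint Q := IsSelfAdjoint.log
  have hφG : φ G = C * J := by
    show J * G * J = C * J
    rw [hG, ← mul_assoc, hJ2, one_mul]
  have hφGsa : IsSelfAdjoint (φ G) := by
    show IsSelfAdjoint (J * G * J)
    have : star (J * G * J) = J * G * J := by
      simp only [star_mul, hJ.star_eq, hGsa.star_eq, mul_assoc]
    exact this
  -- conjugation of the log
  have hmap : φ (cfc Real.log G) = cfc Real.log (φ G) :=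
    StarAlgHomClass.map_cfc (S := ℂ) φ Real.log G hlogcont hφcont hGsa hφGsa
  have hCJ : C * J = (↑U⁻¹ : E →L[ℂ] E) := rfl
  have hloginvcont : ContinuousOn Real.log ((·⁻¹) '' spectrum ℝ G) := by
    refine Real.continuousOn_log.mono ?_
    rintro y ⟨x, hx, rfl⟩
    exact Set.mem_compl_singleton_iff.mpr (inv_ne_zero (hne x hx))
  have hloginv : cfc Real.log ((↑U⁻¹ : E →L[ℂ] E)) = -Q := by
    rw [← cfc_comp_inv Real.log U hloginvcont hGsa]
    have : cfc (fun x : ℝ => Real.log x⁻¹) (↑U : E →L[ℂ] E) =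
        cfc (fun x : ℝ => -(Real.log x)) (↑U : E →L[ℂ] E) := by
      exact cfc_congr fun x _ => Real.log_inv x
    rw [show ((↑U : E →L[ℂ] E)) = G from rfl] at this ⊢
    rw [this, cfc_neg Real.log G]
    rfl
  have hanticonj : J * Q * J = -Q := by
    have : φ Q = -Q := by
      rw [hQ, CFC.log, hmap, hφG, hCJ, hloginv]
      rfl
    exact this
  refine ⟨Q, hQsa, ?_, ?_⟩
  · -- J * Q = -(Q * J)
    have := congrArg (· * J) hanticonj
    simp only [mul_assoc, hJ2, mul_one, neg_mul] at this
    exact this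
  · -- C = J * exp ℂ Q
    have hexp : exp Q = G := by
      rw [hQ, CFC.exp_log G (U.isUnit.isStrictlyPositive hGnn)]
    rw [hexp, hG, ← mul_assoc, hJ2, one_mul]
end

section
/- Let C = J e^Q with Q bounded self-adjoint anticommuting with J, and define T = (I − e^Q)(I + e^Q)^{−1}. Then T is self-adjoint, anticommutes with J, satisfies ‖Tf‖ < ‖f‖ for all nonzero f, and T = −tanh(Q/2). -/
open NormedSpace

private lemma tanh_half_eq (x : ℝ) :
    Real.tanh (x / 2) = (Real.exp x - 1) / (Real.exp x + 1) := by
  have h2 : Real.exp (x / 2) * Real.exp (x / 2) = Real.exp x := by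
    rw [← Real.exp_add]; ring_nf
  have hpos : 0 < Real.exp (x / 2) := Real.exp_pos _
  have hden : Real.exp (x / 2) + Real.exp (-(x / 2)) ≠ 0 := by positivity
  have hden2 : Real.exp x + 1 ≠ 0 := by positivity
  have hden' : (Real.exp (x / 2) + Real.exp (-(x / 2))) / 2 ≠ 0 := by positivity
  rw [Real.tanh_eq_sinh_div_cosh, Real.sinh_eq, Real.cosh_eq,
    div_eq_div_iff hden' hden2, Real.exp_neg]
  field_simp
  nlinarith [h2, hpos]

private lemma neg_tanh_half_eq (x : ℝ) :
    -Real.tanh (x / 2) = (1 - Real.exp x) * (1 + Real.exp x)⁻¹ := by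
  have hden2 : Real.exp x + 1 ≠ 0 := by positivity
  rw [tanh_half_eq, div_eq_mul_inv, ← neg_mul, neg_sub, add_comm (1 : ℝ)]

private lemma abs_tanh_lt_one (x : ℝ) : |Real.tanh x| < 1 := by
  have h1 : 0 < Real.exp x := Real.exp_pos x
  have h2 : 0 < Real.exp (-x) := Real.exp_pos (-x)
  rw [Real.tanh_eq_sinh_div_cosh, Real.sinh_eq, Real.cosh_eq, abs_div,
    div_lt_one (by positivity), abs_of_pos (show (0:ℝ) < (Real.exp x + Real.exp (-x)) / 2 by positivity)]
  cases abs_cases ((Real.exp x - Real.exp (-x)) / 2) <;> nlinarith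

private lemma continuous_tanh : Continuous Real.tanh := by
  have : Real.tanh = fun x => Real.sinh x / Real.cosh x := by
    funext x; exact Real.tanh_eq_sinh_div_cosh x
  rw [this]
  exact Real.continuous_sinh.div Real.continuous_cosh fun x => (Real.cosh_pos x).ne'

/-- For `C = J e^Q` (`Q` bounded self-adjoint, `JQ = −QJ`), the operator
`T = (I − e^Q)(I + e^Q)^{−1}` is self-adjoint, anticommutes with `J`, is a strong
contraction (`‖Tf‖ < ‖f‖` for `f ≠ 0`), and equals `−tanh(Q/2)` (via the continuous
functional calculus). -/
theorem stmt_6 {E : Type*} [NormedAddCommGroup E] [InnerProductSpace ℂ E] [CompleteSpace E]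
    (J Q : E →L[ℂ] E) (hJ : IsSelfAdjoint J) (hJ2 : J * J = 1)
    (hQ : IsSelfAdjoint Q) (hJQ : J * Q = -(Q * J))
    (T : E →L[ℂ] E) (hT : T = (1 - exp Q) * Ring.inverse (1 + exp Q)) :
    IsSelfAdjoint T ∧ J * T = -(T * J) ∧ (∀ f : E, f ≠ 0 → ‖T f‖ < ‖f‖) ∧
      T = -(cfc (fun x : ℝ => Real.tanh (x / 2)) Q) := by
  have hexp : exp Q = cfc Real.exp Q := by
    exact (CFC.real_exp_eq_normedSpace_exp hQ).symm
  have hcont : Continuous (fun x : ℝ => (1 + Real.exp x)⁻¹) := by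
    refine (continuous_const.add Real.continuous_exp).inv₀ fun x => ?_
    show 1 + Real.exp x ≠ 0
    positivity
  have hne : ∀ x ∈ spectrum ℝ Q, (fun x : ℝ => 1 + Real.exp x) x ≠ 0 := by
    intro x _
    positivity
  have h1 : (1 : E →L[ℂ] E) - exp Q = cfc (fun x : ℝ => 1 - Real.exp x) Q := by
    rw [hexp, cfc_sub (fun _ : ℝ => (1 : ℝ)) Real.exp Q continuousOn_const
      Real.continuous_exp.continuousOn, cfc_const_one ℝ Q]
  have h2 : (1 : E →L[ℂ] E) + exp Q = cfc (fun x : ℝ => 1 + Real.exp x) Q := by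
    rw [hexp, cfc_add (a := Q) (fun _ : ℝ => (1 : ℝ)) Real.exp continuousOn_const
      Real.continuous_exp.continuousOn, cfc_const_one ℝ Q]
  have h3 : Ring.inverse ((1 : E →L[ℂ] E) + exp Q)
      = cfc (fun x : ℝ => (1 + Real.exp x)⁻¹) Q := by
    rw [h2, ← cfc_inv (fun x : ℝ => 1 + Real.exp x) Q hne
      (continuous_const.add Real.continuous_exp).continuousOn]
  have hT' : T = cfc (fun x : ℝ => (1 - Real.exp x) * (1 + Real.exp x)⁻¹) Q := by
    rw [hT, h1, h3, ← cfc_mul (fun x : ℝ => 1 - Real.exp x)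
      (fun x : ℝ => (1 + Real.exp x)⁻¹) Q
      (continuous_const.sub Real.continuous_exp).continuousOn hcont.continuousOn]
  have hT2 : T = cfc (fun x : ℝ => -Real.tanh (x / 2)) Q := by
    rw [hT']
    exact cfc_congr fun x _ => (neg_tanh_half_eq x).symm
  have hcont2 : Continuous (fun x : ℝ => -Real.tanh (x / 2)) := by
    exact (continuous_tanh.comp (continuous_id.div_const 2)).neg
  -- conjugation by J is a ⋆-algebra homomorphism
  have hJQJ : J * Q * J = -Q := by
    rw [hJQ, neg_mul, mul_assoc, hJ2, mul_one]
  let φ : (E →L[ℂ] E) →⋆ₐ[ℂ] (E →L[ℂ] E) :=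
    { toFun := fun x => J * x * J
      map_one' := by show J * 1 * J = 1; rw [mul_one, hJ2]
      map_mul' := fun x y => by
        show J * (x * y) * J = J * x * J * (J * y * J)
        simp only [mul_assoc]
        rw [← mul_assoc J J, hJ2, one_mul]
      map_zero' := by show J * 0 * J = 0; simp
      map_add' := fun x y => by
        show J * (x + y) * J = J * x * J + J * y * J
        rw [mul_add, add_mul]
      commutes' := fun c => by
        show J * algebraMap ℂ (E →L[ℂ] E) c * J = algebraMap ℂ (E →L[ℂ] E) c
        simp only [Algebra.algebraMap_eq_smul_one, mul_smul_comm, smul_mul_assoc, mul_one, hJ2]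
      map_star' := fun x => by
        show J * star x * J = star (J * x * J)
        simp only [star_mul, hJ.star_eq, mul_assoc] }
  have hφcont : Continuous φ := by
    show Continuous fun x : E →L[ℂ] E => J * x * J
    fun_prop
  have hφQ : φ Q = -Q := hJQJ
  have hconj : J * T * J = -T := by
    rw [hT2]
    have key : φ (cfc (fun x : ℝ => -Real.tanh (x / 2)) Q)
        = cfc (fun x : ℝ => -Real.tanh (x / 2)) (φ Q) :=
      StarAlgHomClass.map_cfc (S := ℂ) φ (fun x : ℝ => -Real.tanh (x / 2)) Q
        hcont2.continuousOn hφcont hQ (hφQ ▸ hQ.neg)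
    show φ (cfc (fun x : ℝ => -Real.tanh (x / 2)) Q) = _
    rw [key, hφQ, ← cfc_comp_neg (fun x : ℝ => -Real.tanh (x / 2)) Q hcont2.continuousOn hQ]
    rw [← cfc_neg (fun x : ℝ => -Real.tanh (x / 2)) Q]
    exact cfc_congr fun x _ => by
      simp only [neg_div, Real.tanh_neg, neg_neg]
  refine ⟨?_, ?_, ?_, ?_⟩
  · rw [hT']
    exact cfc_predicate _ Q
  · have := congrArg (· * J) hconj
    simpa only [mul_assoc, hJ2, mul_one, neg_mul] using this
  · intro f hf
    have hTnorm : ‖T‖ < 1 := by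
      rw [hT2]
      refine norm_cfc_lt one_pos fun x _ => ?_
      rw [Real.norm_eq_abs, abs_neg]
      exact abs_tanh_lt_one (x / 2)
    calc ‖T f‖ ≤ ‖T‖ * ‖f‖ := T.le_opNorm f
      _ < 1 * ‖f‖ := by
          exact mul_lt_mul_of_pos_right hTnorm (norm_pos_iff.mpr hf)
      _ = ‖f‖ := one_mul _
  · rw [hT2, cfc_neg (fun x : ℝ => Real.tanh (x / 2)) Q]
end

section
/- Let C = J e^Q with Q bounded self-adjoint anticommuting with J, and set L₊ = (1/2)(I + C)H. Then L₊ is uniformly positive: there exists α > 0 such that [f,f] ≥ α ‖f‖² for all f ∈ L₊, where [f,g] = (Jf,g). -/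
open NormedSpace

/-- For `C = J e^Q` (`Q` bounded self-adjoint, `JQ = −QJ`), the subspace
`L₊ = (1/2)(I+C)H` is uniformly positive: there is `α > 0` with `[f,f] ≥ α‖f‖²` for all
`f ∈ L₊`, where `[f,g] = (Jf,g)`. -/
theorem stmt_10 {E : Type*} [NormedAddCommGroup E] [InnerProductSpace ℂ E] [CompleteSpace E]
    (J Q : E →L[ℂ] E) (hJ : IsSelfAdjoint J) (hJ2 : J * J = 1)
    (hQ : IsSelfAdjoint Q) (hJQ : J * Q = -(Q * J))
    (C : E →L[ℂ] E) (hC : C = J * exp Q)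
    (Lp : Set E) (hLp : Lp = Set.range (fun x : E => ((1 : ℂ)/2) • (x + C x))) :
    ∃ α : ℝ, 0 < α ∧ ∀ f ∈ Lp, α * ‖f‖^2 ≤ (inner ℂ (J f) f : ℂ).re := by
  letI : NormedAlgebra ℚ (E →L[ℂ] E) := NormedAlgebra.restrictScalars ℚ ℂ (E →L[ℂ] E)
  set R : E →L[ℂ] E := ((1 : ℂ)/2) • Q with hRdef
  have hRR : R + R = Q := by
    rw [hRdef, ← add_smul]; norm_num
  set P : E →L[ℂ] E := exp R with hPdef
  set N : E →L[ℂ] E := exp (-R) with hNdef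
  have hPN : P * N = 1 := by
    rw [hPdef, hNdef, ← exp_add_of_commute (Commute.neg_right (Commute.refl R)),
      add_neg_cancel, exp_zero]
  have hNP : N * P = 1 := by
    rw [hPdef, hNdef, ← exp_add_of_commute (Commute.neg_left (Commute.refl R)),
      neg_add_cancel, exp_zero]
  have hQPP : exp Q = P * P := by
    rw [← hRR, exp_add_of_commute (Commute.refl R)]
  -- conjugation
  have hJQJ : J * Q * J = -Q := by
    rw [hJQ, neg_mul, mul_assoc, hJ2, mul_one]
  set u : (E →L[ℂ] E)ˣ := ⟨J, J, hJ2, hJ2⟩ with hu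
  have hconj : J * exp Q * J = exp (-Q) := by
    have := (exp_units_conj u Q).symm
    simpa [hu, hJQJ] using this
  have hC2 : C * C = 1 := by
    rw [hC, ← mul_assoc (J * exp Q) J (exp Q), hconj,
      ← exp_add_of_commute (Commute.neg_left (Commute.refl Q)),
      neg_add_cancel, exp_zero]
  -- R is self-adjoint, hence P is
  have hR : IsSelfAdjoint R := by
    rw [hRdef, IsSelfAdjoint, star_smul, hQ.star_eq]
    simp
  have hP : IsSelfAdjoint P := by rw [hPdef]; exact hR.exp
  refine ⟨1 / (‖N‖ ^ 2 + 1), by positivity, ?_⟩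
  rintro f hf
  rw [hLp] at hf
  obtain ⟨x, hx⟩ := hf
  -- C f = f
  have hCf : C f = f := by
    have hCCx : C (C x) = x := by
      have := congrArg (fun T : E →L[ℂ] E => T x) hC2
      simpa using this
    simp only [← hx, map_smul, map_add, hCCx]
    rw [add_comm (C x) x]
  -- J f = P (P f)
  have hJf : J f = P (P f) := by
    have : J f = J (C f) := by rw [hCf]
    rw [this, hC]
    have : J * (J * exp Q) = exp Q := by rw [← mul_assoc, hJ2, one_mul]
    calc J ((J * exp Q) f) = (J * (J * exp Q)) f := rfl
      _ = (exp Q) f := by rw [this]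
      _ = (P * P) f := by rw [hQPP]
      _ = P (P f) := rfl
  -- inner
  have hinner : (inner ℂ (J f) f : ℂ).re = ‖P f‖ ^ 2 := by
    rw [hJf, show (inner ℂ (P (P f)) f : ℂ) = inner ℂ (P f) (P f) from hP.isSymmetric (P f) f]
    exact inner_self_eq_norm_sq (𝕜 := ℂ) (P f)
  rw [hinner]
  -- norm bound
  have hfN : f = N (P f) := by
    have : N (P f) = (N * P) f := rfl
    rw [this, hNP]; rfl
  have hb : ‖f‖ ≤ ‖N‖ * ‖P f‖ := by
    conv_lhs => rw [hfN]
    exact N.le_opNorm (P f)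
  have hb2 : ‖f‖ ^ 2 ≤ ‖N‖ ^ 2 * ‖P f‖ ^ 2 := by
    rw [← mul_pow]; exact pow_le_pow_left₀ (norm_nonneg f) hb 2
  have hN1 : ‖N‖ ^ 2 ≤ ‖N‖ ^ 2 + 1 := by linarith
  calc 1 / (‖N‖ ^ 2 + 1) * ‖f‖ ^ 2 ≤ 1 / (‖N‖ ^ 2 + 1) * (‖N‖ ^ 2 * ‖P f‖ ^ 2) := by
        apply mul_le_mul_of_nonneg_left hb2; positivity
    _ ≤ ‖P f‖ ^ 2 := by
        rw [div_mul_eq_mul_div, one_mul, div_le_iff₀ (by positivity)]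
        nlinarith [sq_nonneg (‖P f‖), sq_nonneg ‖N‖]
end

section
/- Let A be a J-symmetric operator on H whose eigenvectors {f_n} corresponding to distinct real simple eigenvalues have dense linear span in H. Then [f_n, f_n] ≠ 0 for every n, where [f,g] = (Jf,g). -/
/-- Let `A` be a `J`-symmetric operator whose eigenvectors `{fₙ}`,
corresponding to distinct real (simple) eigenvalues, have dense linear span in `H`.
Then `[fₙ, fₙ] ≠ 0` for every `n`, where `[f,g] = (Jf,g)`. -/
theorem stmt_13 {E : Type*} [NormedAddCommGroup E] [InnerProductSpace ℂ E] [CompleteSpace E]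
    (J : E →L[ℂ] E) (hJ : IsSelfAdjoint J) (hJ2 : J * J = 1)
    (A : E →ₗ.[ℂ] E) (hAdense : Dense (A.domain : Set E))
    (hAsym : ∀ f g : A.domain, (inner ℂ (J (A f)) (g : E) : ℂ) = inner ℂ (J (f : E)) (A g))
    (f : ℕ → A.domain) (lam : ℕ → ℝ)
    (hfne : ∀ n, (f n : E) ≠ 0)
    (heig : ∀ n, A (f n) = (lam n : ℂ) • (f n : E))
    (hdist : Function.Injective lam)
    (hspan : Dense (Submodule.span ℂ (Set.range (fun n => (f n : E))) : Set E)) :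
    ∀ n, inner ℂ (J (f n : E)) (f n : E) ≠ (0 : ℂ) := by
  intro n hzero
  -- J f_n is orthogonal to every f_m
  have key : ∀ m, (inner ℂ (J (f n : E)) (f m : E) : ℂ) = 0 := by
    intro m
    rcases eq_or_ne m n with rfl | hmn
    · exact hzero
    · have h := hAsym (f n) (f m)
      rw [heig n, heig m, map_smul, inner_smul_left, inner_smul_right] at h
      have hlam : (starRingEnd ℂ) ((lam n : ℂ)) = (lam n : ℂ) := by
        simp [Complex.conj_ofReal]
      rw [hlam] at h
      have hne : (lam n : ℂ) ≠ (lam m : ℂ) := by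
        exact_mod_cast fun hc => (hmn (hdist (by exact_mod_cast hc)).symm)
      have : ((lam n : ℂ) - (lam m : ℂ)) * inner ℂ (J (f n : E)) (f m : E) = 0 := by
        ring_nf
        ring_nf at h
        linear_combination h
      rcases mul_eq_zero.mp this with h1 | h2
      · exact absurd (sub_eq_zero.mp h1) hne
      · exact h2
  -- hence orthogonal to the span
  have hspan0 : ∀ x ∈ Submodule.span ℂ (Set.range (fun n => (f n : E))),
      (inner ℂ (J (f n : E)) x : ℂ) = 0 := by
    intro x hx
    induction hx using Submodule.span_induction with
    | mem x hx => obtain ⟨m, rfl⟩ := hx; exact key m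
    | zero => simp
    | add x y _ _ hx hy => rw [inner_add_right, hx, hy, add_zero]
    | smul c x _ hx => rw [inner_smul_right, hx, mul_zero]
  -- by density, orthogonal to everything
  have hall : ∀ x : E, (inner ℂ (J (f n : E)) x : ℂ) = 0 := by
    intro x
    have hcont : Continuous fun y : E => (inner ℂ (J (f n : E)) y : ℂ) :=
      continuous_inner.comp (continuous_const.prodMk continuous_id)
    have : (fun y : E => (inner ℂ (J (f n : E)) y : ℂ)) = fun _ => (0 : ℂ) := by
      apply Continuous.ext_on hspan hcont continuous_const
      intro y hy
      exact hspan0 y hy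
    exact congrFun this x
  have hJf : J (f n : E) = 0 := by
    have := hall (J (f n : E))
    exact inner_self_eq_zero.mp this
  have : (f n : E) = 0 := by
    have h2 := congrFun (congrArg (fun T : E →L[ℂ] E => (T : E → E)) hJ2) (f n : E)
    simp only [ContinuousLinearMap.mul_apply, ContinuousLinearMap.one_apply] at h2
    rw [hJf, map_zero] at h2
    exact h2.symm
  exact hfne n this
end

section
/- Let T be a bounded self-adjoint operator with ‖T‖ < 1 and JT = −TJ, and let C = J(I+T)^{−1}(I−T). Then C is bounded, C² = I, and JC = (I+T)^{−1}(I−T) is a positive self-adjoint operator. -/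
/-- If `T` is bounded self-adjoint with `‖T‖ < 1` and `JT = −TJ`, then
`C = J(I+T)^{−1}(I−T)` is bounded with `C² = I`, and `JC = (I+T)^{−1}(I−T)` is a positive
self-adjoint operator. -/
theorem stmt_14 {E : Type*} [NormedAddCommGroup E] [InnerProductSpace ℂ E] [CompleteSpace E]
    (J T : E →L[ℂ] E) (hJ : IsSelfAdjoint J) (hJ2 : J * J = 1)
    (hT : IsSelfAdjoint T) (hTn : ‖T‖ < 1) (hJT : J * T = -(T * J))
    (C : E →L[ℂ] E) (hC : C = J * (Ring.inverse (1 + T) * (1 - T))) :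
    C * C = 1 ∧ J * C = Ring.inverse (1 + T) * (1 - T) ∧
      IsSelfAdjoint (Ring.inverse (1 + T) * (1 - T)) ∧
      ∀ f : E, f ≠ 0 → 0 < (inner ℂ ((Ring.inverse (1 + T) * (1 - T)) f) f : ℂ).re := by
  have hTn' : ‖-T‖ < 1 := by rwa [norm_neg]
  set u : (E →L[ℂ] E)ˣ := Units.oneSub (-T) hTn' with hu
  set v : (E →L[ℂ] E)ˣ := Units.oneSub T hTn with hv
  have huv : (u : E →L[ℂ] E) = 1 + T := by simp [hu, sub_neg_eq_add]
  have hvv : (v : E →L[ℂ] E) = 1 - T := by simp [hv]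
  set a : E →L[ℂ] E := ((u⁻¹ : (E →L[ℂ] E)ˣ) : E →L[ℂ] E) with ha
  have hinv : Ring.inverse ((1 : E →L[ℂ] E) + T) = a := by
    rw [← huv, Ring.inverse_unit]
  have hP1 : (1 + T) * a = 1 := by rw [← huv]; exact u.mul_inv
  have h1P : a * (1 + T) = 1 := by rw [← huv]; exact u.inv_mul
  -- J conjugation facts
  have hJP : J * (1 + T) = (1 - T) * J := by
    rw [mul_add, mul_one, hJT, sub_mul, one_mul, sub_eq_add_neg]
  have hJM : J * (1 - T) = (1 + T) * J := by
    rw [mul_sub, mul_one, hJT, add_mul, one_mul, sub_neg_eq_add]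
  have hJa : J * a = ((v⁻¹ : (E →L[ℂ] E)ˣ) : E →L[ℂ] E) * J := by
    have h1 : ((v⁻¹ : (E →L[ℂ] E)ˣ) : E →L[ℂ] E) * (J * (u : E →L[ℂ] E)) * a
        = ((v⁻¹ : (E →L[ℂ] E)ˣ) : E →L[ℂ] E) * ((v : E →L[ℂ] E) * J) * a := by
      rw [huv, hvv, hJP]
    calc J * a = ((v⁻¹ : (E →L[ℂ] E)ˣ) : E →L[ℂ] E) * ((v : E →L[ℂ] E) * J) * a := by
            rw [← mul_assoc, v.inv_mul, one_mul]
      _ = ((v⁻¹ : (E →L[ℂ] E)ˣ) : E →L[ℂ] E) * (J * (u : E →L[ℂ] E)) * a := h1.symm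
      _ = ((v⁻¹ : (E →L[ℂ] E)ˣ) : E →L[ℂ] E) * J * ((u : E →L[ℂ] E) * a) := by
            rw [mul_assoc, mul_assoc, mul_assoc]
      _ = ((v⁻¹ : (E →L[ℂ] E)ˣ) : E →L[ℂ] E) * J := by rw [ha, u.mul_inv, mul_one]
  have hvJ : (v : E →L[ℂ] E) * J = J * (u : E →L[ℂ] E) := by
    rw [huv, hvv, ← hJP]
  -- C * C = 1
  have hJC : J * C = a * (v : E →L[ℂ] E) := by
    rw [hC, ← mul_assoc, hJ2, one_mul, hinv, hvv]
  have hCC : C * C = 1 := by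
    have hconj : J * (a * (v : E →L[ℂ] E)) * J
        = ((v⁻¹ : (E →L[ℂ] E)ˣ) : E →L[ℂ] E) * (u : E →L[ℂ] E) := by
      calc J * (a * (v : E →L[ℂ] E)) * J
          = (J * a) * ((v : E →L[ℂ] E) * J) := by rw [← mul_assoc, mul_assoc _ _ J, mul_assoc]
        _ = ((v⁻¹ : (E →L[ℂ] E)ˣ) : E →L[ℂ] E) * J * (J * (u : E →L[ℂ] E)) := by
            rw [hJa, hvJ]
        _ = ((v⁻¹ : (E →L[ℂ] E)ˣ) : E →L[ℂ] E) * (J * J) * (u : E →L[ℂ] E) := by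
            rw [mul_assoc, mul_assoc, mul_assoc]
        _ = ((v⁻¹ : (E →L[ℂ] E)ˣ) : E →L[ℂ] E) * (u : E →L[ℂ] E) := by
            rw [hJ2, mul_one]
    calc C * C = (J * (a * (v : E →L[ℂ] E)) * J) * (a * (v : E →L[ℂ] E)) := by
          rw [hC, hinv, ← hvv, ← mul_assoc]
      _ = ((v⁻¹ : (E →L[ℂ] E)ˣ) : E →L[ℂ] E) * ((u : E →L[ℂ] E) * a) * (v : E →L[ℂ] E) := by
          rw [hconj, mul_assoc, ← mul_assoc _ (a) _, ← mul_assoc, ← mul_assoc]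
      _ = 1 := by rw [ha, u.mul_inv, mul_one, v.inv_mul]
  -- commutation of a with (1 - T)
  have hcomm : a * (1 - T) = (1 - T) * a := by
    have h2 : ((1 : E →L[ℂ] E) + T) * (1 - T) = (1 - T) * (1 + T) := by noncomm_ring
    calc a * (1 - T) = a * (1 - T) * ((1 + T) * a) := by rw [hP1, mul_one]
      _ = a * ((1 - T) * (1 + T)) * a := by rw [mul_assoc, mul_assoc, mul_assoc]
      _ = a * ((1 + T) * (1 - T)) * a := by rw [h2]
      _ = (a * (1 + T)) * ((1 - T) * a) := by rw [mul_assoc, mul_assoc, mul_assoc]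
      _ = (1 - T) * a := by rw [h1P, one_mul]
  -- self-adjointness
  have hstar_a : star a = a := by
    have hsP : star ((1 : E →L[ℂ] E) + T) = 1 + T := by
      rw [star_add, star_one, hT]
    have h3 : star a * (1 + T) = 1 := by
      rw [← hsP, ← star_mul, hP1, star_one]
    have h4 : (1 + T) * star a = 1 := by
      rw [← hsP, ← star_mul, h1P, star_one]
    calc star a = (a * (1 + T)) * star a := by rw [h1P, one_mul]
      _ = a * ((1 + T) * star a) := by rw [mul_assoc]
      _ = a := by rw [h4, mul_one]
  have hSA : IsSelfAdjoint (Ring.inverse ((1 : E →L[ℂ] E) + T) * (1 - T)) := by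
    rw [hinv]
    show star (a * (1 - T)) = a * (1 - T)
    rw [star_mul, star_sub, star_one, hT, hstar_a, ← hcomm]
  refine ⟨hCC, by rw [hJC, hinv, hvv], hSA, ?_⟩
  -- positivity
  intro f hf
  rw [hinv]
  set g : E := a f with hg
  have hfg : (1 + T) g = f := by
    have := congrArg (fun S : E →L[ℂ] E => S f) hP1
    simpa [ContinuousLinearMap.mul_apply] using this
  have hAf : (a * (1 - T)) f = g - T g := by
    rw [hcomm]
    simp [ContinuousLinearMap.mul_apply, hg]
  have hg0 : g ≠ 0 := fun h => hf (by rw [← hfg, h, map_zero])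
  have hkey : (inner ℂ ((a * (1 - T)) f) f : ℂ).re = ‖g‖ ^ 2 - ‖T g‖ ^ 2 := by
    rw [hAf, ← hfg]
    have hadd : (1 + T) g = g + T g := by
      simp [ContinuousLinearMap.add_apply]
    rw [hadd, inner_sub_left, inner_add_right, inner_add_right]
    have hsym : (inner ℂ (T g) g : ℂ) = inner ℂ g (T g) := hT.isSymmetric g g
    have h1 : (inner ℂ g g : ℂ).re = ‖g‖ ^ 2 := by
      rw [inner_self_eq_norm_sq_to_K (𝕜 := ℂ)]; norm_cast
    have h2 : (inner ℂ (T g) (T g) : ℂ).re = ‖T g‖ ^ 2 := by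
      rw [inner_self_eq_norm_sq_to_K (𝕜 := ℂ)]; norm_cast
    rw [hsym]
    simp only [Complex.sub_re, Complex.add_re, h1, h2]
    ring
  rw [hkey]
  have hTg : ‖T g‖ < ‖g‖ := by
    calc ‖T g‖ ≤ ‖T‖ * ‖g‖ := T.le_opNorm g
      _ < 1 * ‖g‖ := by
          exact mul_lt_mul_of_pos_right hTn (norm_pos_iff.mpr hg0)
      _ = ‖g‖ := one_mul _
  have : ‖T g‖ ^ 2 < ‖g‖ ^ 2 := by
    nlinarith [norm_nonneg (T g), norm_nonneg g]
  linarith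
end

section
/- Let T be a bounded self-adjoint strong contraction (‖Tf‖ < ‖f‖ for f ≠ 0) anticommuting with J, let L₊ = (I+T)H₊ with H₊ = ker(J−I), and let P̂ denote the orthogonal projection onto the closure of L₊ and P₊ = (1/2)(I+J). Then for every f ∈ H₊, P₊ P̂ f = (I + T²)^{−1} f; consequently (I_{H₊} − P₊P̂)↾H₊ = T²(I+T²)^{−1}↾H₊. -/
/-- Let `T` be a bounded self-adjoint strong contraction (with `‖T‖ < 1`)
anticommuting with the fundamental symmetry `J`, let `L₊ = (I+T)H₊` where
`H₊ = ker(J−I)`, let `P̂` be the orthogonal projection onto the closure `K` of `L₊`, and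
`P₊ = (1/2)(I+J)`. Then for every `f ∈ H₊`, `P₊ P̂ f = (I+T²)^{−1} f`; consequently
`(I − P₊P̂)f = T²(I+T²)^{−1} f` on `H₊`. -/
theorem stmt_15 {E : Type*} [NormedAddCommGroup E] [InnerProductSpace ℂ E] [CompleteSpace E]
    (J T : E →L[ℂ] E) (hJ : IsSelfAdjoint J) (hJ2 : J * J = 1)
    (hT : IsSelfAdjoint T) (hTc : ∀ f : E, f ≠ 0 → ‖T f‖ < ‖f‖) (hTn : ‖T‖ < 1)
    (hJT : J * T = -(T * J))
    (K : Submodule ℂ E) [CompleteSpace K]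
    (hK : K = (Submodule.map ((1 + T : E →L[ℂ] E) : E →ₗ[ℂ] E)
        (LinearMap.ker ((J - 1 : E →L[ℂ] E) : E →ₗ[ℂ] E))).topologicalClosure) :
    ∀ f : E, J f = f →
      ((1 : ℂ)/2) • ((K.orthogonalProjectionOnto f : E) + J (K.orthogonalProjectionOnto f : E)) =
          Ring.inverse (1 + T * T) f ∧
      f - ((1 : ℂ)/2) • ((K.orthogonalProjectionOnto f : E) + J (K.orthogonalProjectionOnto f : E)) =
          (T * T) (Ring.inverse (1 + T * T) f) := by
  intro f hf
  -- `1 + T²` is a unit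
  have hnorm : ‖-(T * T)‖ < 1 := by
    rw [norm_neg]
    calc ‖T * T‖ ≤ ‖T‖ * ‖T‖ := norm_mul_le _ _
      _ < 1 := by nlinarith [norm_nonneg T]
  have hunit : IsUnit (1 + T * T : E →L[ℂ] E) := by
    have := isUnit_one_sub_of_norm_lt_one hnorm
    simpa using this
  set S : E →L[ℂ] E := Ring.inverse (1 + T * T) with hS
  have hcancel : (1 + T * T) * S = 1 := Ring.mul_inverse_cancel _ hunit
  have hcancel' : S * (1 + T * T) = 1 := Ring.inverse_mul_cancel _ hunit
  set u : E := S f with hu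
  have huf : u + (T * T) u = f := by
    have := congrArg (fun A : E →L[ℂ] E => A f) hcancel
    simpa [ContinuousLinearMap.add_apply, ContinuousLinearMap.mul_apply] using this
  -- J commutes with T²
  have hcomm : J * (T * T) = (T * T) * J := by
    calc J * (T * T) = (J * T) * T := (mul_assoc _ _ _).symm
      _ = (-(T * J)) * T := by rw [hJT]
      _ = -(T * (J * T)) := by rw [neg_mul, mul_assoc]
      _ = -(T * (-(T * J))) := by rw [hJT]
      _ = (T * T) * J := by rw [mul_neg, neg_neg, mul_assoc]
  have hcomm' : ∀ x : E, J ((T * T) x) = (T * T) (J x) := by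
    intro x
    have := congrArg (fun A : E →L[ℂ] E => A x) hcomm
    simpa [ContinuousLinearMap.mul_apply] using this
  have hanti : ∀ x : E, J (T x) = -T (J x) := by
    intro x
    have := congrArg (fun A : E →L[ℂ] E => A x) hJT
    simpa [ContinuousLinearMap.mul_apply] using this
  -- J u = u
  have hinj : ∀ x : E, S ((1 + T * T) x) = x := by
    intro x
    have := congrArg (fun A : E →L[ℂ] E => A x) hcancel'
    simpa [ContinuousLinearMap.mul_apply] using this
  have happ : (1 + T * T) u = f := by
    simpa [ContinuousLinearMap.add_apply, ContinuousLinearMap.one_apply] using huf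
  have hJu : J u = u := by
    have h1 : (1 + T * T) (J u) = f := by
      have e : (1 + T * T) (J u) = J ((1 + T * T) u) := by
        have h := hcomm' u
        simp only [ContinuousLinearMap.mul_apply] at h
        simp only [ContinuousLinearMap.add_apply, ContinuousLinearMap.one_apply,
          ContinuousLinearMap.mul_apply, map_add, h]
      rw [e, happ, hf]
    calc J u = S ((1 + T * T) (J u)) := (hinj _).symm
      _ = S f := by rw [h1]
      _ = u := rfl
  set g : E := u + T u with hg
  -- orthogonality of H₊ and H₋
  have horth : ∀ x y : E, J x = -x → J y = y → (inner ℂ x y : ℂ) = 0 := by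
    intro x y hx hy
    have h1 : (inner ℂ (J x) y : ℂ) = inner ℂ x y := by
      have := hJ.isSymmetric x y
      simp only [ContinuousLinearMap.coe_coe] at this
      rw [this, hy]
    have h3 : (inner ℂ (J x) y : ℂ) = -(inner ℂ x y) := by rw [hx, inner_neg_left]
    have h2 : (inner ℂ x y : ℂ) = -(inner ℂ x y) := h1.symm.trans h3
    linear_combination h2 / 2
  -- the projection of f onto K is g
  have hproj : (K.orthogonalProjectionOnto f : E) = g := by
    rw [← Submodule.starProjection_apply]
    apply Submodule.eq_starProjection_of_mem_of_inner_eq_zero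
    · rw [hK]
      apply Submodule.le_topologicalClosure
      refine ⟨u, ?_, ?_⟩
      · simp only [SetLike.mem_coe, LinearMap.mem_ker, ContinuousLinearMap.coe_coe,
          ContinuousLinearMap.sub_apply, ContinuousLinearMap.one_apply]
        rw [hJu, sub_self]
      · simp only [ContinuousLinearMap.coe_coe, ContinuousLinearMap.add_apply,
          ContinuousLinearMap.one_apply, hg]
    · intro w hw
      have hmem : f - g ∈ Kᗮ := by
        rw [hK, ← Submodule.orthogonal_orthogonal_eq_closure,
          Submodule.triorthogonal_eq_orthogonal]
        rw [Submodule.mem_orthogonal']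
        rintro w' ⟨v, hv, rfl⟩
        have hJv : J v = v := by
          simp only [SetLike.mem_coe, LinearMap.mem_ker, ContinuousLinearMap.coe_coe,
            ContinuousLinearMap.sub_apply, ContinuousLinearMap.one_apply] at hv
          linear_combination (norm := abel) hv
        set x : E := (T * T) u - T u with hx
        have hfg : f - g = x := by rw [hg, hx, ← huf]; abel
        have hwv : ((1 + T : E →L[ℂ] E) : E →ₗ[ℂ] E) v = v + T v := by
          simp [ContinuousLinearMap.add_apply, ContinuousLinearMap.one_apply]
        rw [hfg, hwv]
        have key : (inner ℂ x (v + T v) : ℂ) = inner ℂ (x + T x) v := by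
          rw [inner_add_right, inner_add_left]
          congr 1
          have := hT.isSymmetric x v
          simp only [ContinuousLinearMap.coe_coe] at this
          exact this.symm
        rw [key]
        apply horth _ _ _ hJv
        simp only [hx, ContinuousLinearMap.mul_apply, map_sub, map_add, hanti, hJu,
          map_neg, neg_neg]
        abel
      rw [Submodule.mem_orthogonal'] at hmem
      exact hmem w hw
  rw [hproj]
  have hJg : J g = u - T u := by
    rw [hg, map_add, hJu, hanti, hJu]
    abel
  constructor
  · rw [hJg, hg]
    have e : u + T u + (u - T u) = (2 : ℂ) • u := by
      rw [two_smul]; abel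
    rw [e, smul_smul]
    norm_num
  · rw [hJg, hg]
    have e : u + T u + (u - T u) = (2 : ℂ) • u := by
      rw [two_smul]; abel
    rw [e, smul_smul]
    norm_num
    rw [← huf]
    abel
end

section
/- Let H be a bounded operator on a Hilbert space that commutes with C = J e^Q, where Q is bounded self-adjoint and JQ = −QJ, and suppose H is J-self-adjoint: JH = H*J. Then H is self-adjoint with respect to the equivalent inner product (f,g)_C = (e^Q f, g), i.e., (Hf, g)_C = (f, Hg)_C for all f, g ∈ H. -/
open NormedSpace

/-- If a bounded operator `H` commutes with `C = J e^Q` (`Q` bounded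
self-adjoint, `JQ = −QJ`) and is `J`-self-adjoint (`JH = H*J`), then `H` is self-adjoint
for the equivalent inner product `(f,g)_C = (e^Q f, g)`:
`(Hf, g)_C = (f, Hg)_C` for all `f, g`. -/
theorem stmt_19 {E : Type*} [NormedAddCommGroup E] [InnerProductSpace ℂ E] [CompleteSpace E]
    (J Q H : E →L[ℂ] E) (hJ : IsSelfAdjoint J) (hJ2 : J * J = 1)
    (hQ : IsSelfAdjoint Q) (hJQ : J * Q = -(Q * J))
    (C : E →L[ℂ] E) (hC : C = J * exp Q)
    (hcomm : H * C = C * H)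
    (hJsa : J * H = ContinuousLinearMap.adjoint H * J) :
    ∀ f g : E, (inner ℂ ((exp Q) (H f)) g : ℂ) = inner ℂ ((exp Q) f) (H g) := by
  subst hC
  have key : ContinuousLinearMap.adjoint H * exp Q = exp Q * H := by
    calc ContinuousLinearMap.adjoint H * exp Q
        = (ContinuousLinearMap.adjoint H * J) * J * exp Q := by
          rw [mul_assoc (ContinuousLinearMap.adjoint H) J J, hJ2, mul_one]
      _ = J * (H * (J * exp Q)) := by rw [← hJsa]; simp only [mul_assoc]
      _ = J * ((J * exp Q) * H) := by rw [hcomm]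
      _ = exp Q * H := by rw [show J * (J * exp Q * H) = (J * J) * (exp Q * H) by simp only [mul_assoc],
          hJ2, one_mul]
  intro f g
  have h1 : (exp Q) (H f) = (ContinuousLinearMap.adjoint H) ((exp Q) f) := by
    have := congrArg (fun T : E →L[ℂ] E => T f) key.symm
    simpa using this
  rw [h1, ContinuousLinearMap.adjoint_inner_left]
end
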